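/- Let d ≥ 1, T > 0 and γ > 1. Let Φ : ℝ^d × [0,T] → ℝ be C² in the space variable with M₁ := sup_{ℝ^d×[0,T]} |∇Φ| < ∞ and M₂ := sup_{ℝ^d×[0,T]} |ΔΦ| < ∞, and let G₀ ≥ 0. Suppose C > 0 satisfies C ≥ (2/d)(G₀ + M₂), and R : [0,T] → (0,∞) is differentiable with R'(t) ≥ (2C+1)R(t) + M₁²/2 for all t ∈ [0,T]. Define Π(x,t) := C (R(t) − |x|²/2). Then for every (x,t) ∈ ℝ^d × [0,T] with |x|² < 2R(t) one has ∂_t Π(x,t) − |∇Π(x,t)|² − ∇Π(x,t)·∇Φ(x,t) − γ Π(x,t) (ΔΠ(x,t) + G₀ + M₂) ≥ 0; that is, Π is a pointwise supersolution of the pressure inequality on the region where it is positive. -/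

import Mathlib

open MeasureTheory Real Set Filter Topology
open scoped RealInnerProductSpace
noncomputable section

/-- Spatial partial derivative in the `i`-th coordinate direction. -/
def pd {d : ℕ} (i : Fin d) (f : EuclideanSpace ℝ (Fin d) → ℝ)
    (x : EuclideanSpace ℝ (Fin d)) : ℝ :=
  fderiv ℝ f x (EuclideanSpace.single i 1)

/-- Spatial Laplacian. -/
def lap {d : ℕ} (f : EuclideanSpace ℝ (Fin d) → ℝ) (x : EuclideanSpace ℝ (Fin d)) : ℝ :=
  ∑ i, pd i (pd i f) x

lemma hasFDerivAt_par {d : ℕ} (C c : ℝ) (x : EuclideanSpace ℝ (Fin d)) :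
    HasFDerivAt (fun y : EuclideanSpace ℝ (Fin d) => C * (c - ‖y‖ ^ 2 / 2))
      ((-C) • innerSL ℝ x) x := by
  have h1 : HasFDerivAt (fun y : EuclideanSpace ℝ (Fin d) => ‖y‖ ^ 2)
      (2 • innerSL ℝ x) x := (hasStrictFDerivAt_norm_sq x).hasFDerivAt
  have h2 := (hasFDerivAt_const (C * c) x).sub (h1.const_mul (C / 2))
  have hfun : (fun y : EuclideanSpace ℝ (Fin d) => C * (c - ‖y‖ ^ 2 / 2)) =
      fun y => C * c - C / 2 * ‖y‖ ^ 2 := by funext y; ring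
  rw [hfun]
  refine HasFDerivAt.congr_fderiv h2 ?_
  ext v
  simp
  ring

lemma hasGradientAt_par {d : ℕ} (C c : ℝ) (x : EuclideanSpace ℝ (Fin d)) :
    HasGradientAt (fun y : EuclideanSpace ℝ (Fin d) => C * (c - ‖y‖ ^ 2 / 2))
      ((-C) • x) x := by
  rw [hasGradientAt_iff_hasFDerivAt]
  refine HasFDerivAt.congr_fderiv (hasFDerivAt_par C c x) ?_
  ext v
  simp [real_inner_smul_left]

lemma pd_par {d : ℕ} (C c : ℝ) (i : Fin d) (x : EuclideanSpace ℝ (Fin d)) :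
    pd i (fun y : EuclideanSpace ℝ (Fin d) => C * (c - ‖y‖ ^ 2 / 2)) x = -C * x i := by
  rw [pd, (hasFDerivAt_par C c x).fderiv]
  simp [EuclideanSpace.inner_single_right]

lemma lap_par {d : ℕ} (C c : ℝ) (x : EuclideanSpace ℝ (Fin d)) :
    lap (fun y : EuclideanSpace ℝ (Fin d) => C * (c - ‖y‖ ^ 2 / 2)) x = -C * d := by
  unfold lap
  have h : (pd · (fun y : EuclideanSpace ℝ (Fin d) => C * (c - ‖y‖ ^ 2 / 2))) =
      fun i z => -C * z i := by
    funext i z; exact pd_par C c i z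
  have key : ∀ i : Fin d, pd i (pd i (fun y : EuclideanSpace ℝ (Fin d) =>
      C * (c - ‖y‖ ^ 2 / 2))) x = -C := by
    intro i
    have hf : (pd i (fun y : EuclideanSpace ℝ (Fin d) => C * (c - ‖y‖ ^ 2 / 2))) =
        fun z : EuclideanSpace ℝ (Fin d) => -C * z i := congrFun h i
    rw [hf, pd]
    have hd : HasFDerivAt (fun z : EuclideanSpace ℝ (Fin d) => -C * z i)
        ((-C) • (EuclideanSpace.proj i : EuclideanSpace ℝ (Fin d) →L[ℝ] ℝ)) x := by
      have := ((EuclideanSpace.proj (𝕜 := ℝ) (ι := Fin d) i).hasFDerivAt (x := x)).const_mul (-C)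
      exact this
    rw [hd.fderiv]
    simp [EuclideanSpace.single_apply]
  simp only [key]
  simp [mul_comm]

/-- the explicit parabola `Π(x,t) = C (R(t) − |x|²/2)` is a pointwise
supersolution of the pressure inequality on the region where `|x|² < 2R(t)`. -/
theorem stmt0 (d : ℕ) (hd : 1 ≤ d) (T : ℝ) (hT : 0 < T) (γ : ℝ) (hγ : 1 < γ)
    (Φ : EuclideanSpace ℝ (Fin d) → ℝ → ℝ) (M₁ M₂ G₀ : ℝ)
    (hΦC2 : ∀ t ∈ Icc (0:ℝ) T, ContDiff ℝ 2 (fun x => Φ x t))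
    (hM₁ : ∀ (x : EuclideanSpace ℝ (Fin d)), ∀ t ∈ Icc (0:ℝ) T,
      ‖gradient (fun y => Φ y t) x‖ ≤ M₁)
    (hM₂ : ∀ (x : EuclideanSpace ℝ (Fin d)), ∀ t ∈ Icc (0:ℝ) T,
      |lap (fun y => Φ y t) x| ≤ M₂)
    (hG₀ : 0 ≤ G₀)
    (C : ℝ) (hC : 0 < C) (hCd : (2 / (d : ℝ)) * (G₀ + M₂) ≤ C)
    (R : ℝ → ℝ) (hRdiff : ∀ t ∈ Icc (0:ℝ) T, DifferentiableAt ℝ R t)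
    (hRpos : ∀ t ∈ Icc (0:ℝ) T, 0 < R t)
    (hR' : ∀ t ∈ Icc (0:ℝ) T, (2 * C + 1) * R t + M₁ ^ 2 / 2 ≤ deriv R t)
    (Pr : EuclideanSpace ℝ (Fin d) → ℝ → ℝ)
    (hPr : ∀ x t, Pr x t = C * (R t - ‖x‖ ^ 2 / 2)) :
    ∀ (x : EuclideanSpace ℝ (Fin d)), ∀ t ∈ Icc (0:ℝ) T, ‖x‖ ^ 2 < 2 * R t →
      0 ≤ deriv (fun s => Pr x s) t - ‖gradient (fun y => Pr y t) x‖ ^ 2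
          - ⟪gradient (fun y => Pr y t) x, gradient (fun y => Φ y t) x⟫
          - γ * Pr x t * (lap (fun y => Pr y t) x + G₀ + M₂) := by
  intro x t ht hx
  have hRt := hRpos t ht
  have hdpos : (0:ℝ) < d := by
    have : (1:ℝ) ≤ d := by exact_mod_cast hd
    linarith
  have hM2 : 0 ≤ M₂ := le_trans (abs_nonneg _) (hM₂ 0 0 ⟨le_refl 0, hT.le⟩)
  -- time derivative
  have hderiv : deriv (fun s => Pr x s) t = C * deriv R t := by
    simp only [hPr]
    exact (((hRdiff t ht).hasDerivAt.sub_const _).const_mul C).deriv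
  -- gradient
  have hgrad : gradient (fun y => Pr y t) x = (-C) • x := by
    simp only [hPr]
    exact (hasGradientAt_par C (R t) x).gradient
  -- laplacian
  have hlap : lap (fun y => Pr y t) x = -C * d := by
    simp only [hPr]
    exact lap_par C (R t) x
  set g := gradient (fun y => Φ y t) x with hg
  have hnorm : ‖(-C) • x‖ ^ 2 = C ^ 2 * ‖x‖ ^ 2 := by
    rw [norm_smul]
    simp [mul_pow, sq_abs]
  have hinner : ⟪(-C) • x, g⟫ = -C * ⟪x, g⟫ := real_inner_smul_left x g (-C)
  have hib : |⟪x, g⟫| ≤ ‖x‖ * M₁ := by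
    refine (abs_real_inner_le_norm x g).trans ?_
    exact mul_le_mul_of_nonneg_left (hM₁ x t ht) (norm_nonneg x)
  have hib' : -(‖x‖ * M₁) ≤ ⟪x, g⟫ := (abs_le.mp hib).1
  -- key : G₀ + M₂ ≤ C * d
  have hmul : (2 / (d:ℝ)) * (G₀ + M₂) * d = 2 * (G₀ + M₂) := by
    field_simp
  have h2 : 2 * (G₀ + M₂) ≤ C * d := by
    rw [← hmul]
    exact mul_le_mul_of_nonneg_right hCd hdpos.le
  have hfac : -C * d + G₀ + M₂ ≤ 0 := by linarith
  have hPpos : 0 < C * (R t - ‖x‖ ^ 2 / 2) := mul_pos hC (by linarith)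
  have hA : γ * Pr x t * (-C * d + G₀ + M₂) ≤ 0 := by
    rw [hPr]
    exact mul_nonpos_of_nonneg_of_nonpos
      (mul_nonneg (by linarith) hPpos.le) (by linarith)
  rw [hderiv, hgrad, hlap, hnorm, hinner]
  have hR't := hR' t ht
  have hCRd : C * ((2 * C + 1) * R t + M₁ ^ 2 / 2) ≤ C * deriv R t :=
    mul_le_mul_of_nonneg_left hR't hC.le
  nlinarith [mul_pos (mul_pos hC hC) (show (0:ℝ) < 2 * R t - ‖x‖ ^ 2 by linarith),
    mul_nonneg hC.le (sq_nonneg (‖x‖ - M₁)),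
    mul_le_mul_of_nonneg_left hib' hC.le]
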